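/- arXiv:math/0608637 — 4 statements merged into one kernel-verified Lean document; each statement's English description precedes it below -/
import Mathlib

section
/- Let (V_n) be a subadditive sequence of nonnegative real numbers (V_{m+n} ≤ V_m + V_n) such that ∑_{n≥1} n^{-3/2} V_n < ∞. Then for every m, the series ∑_{j≥0} V_{m·2^j}/2^{j/2} converges, and lim_{m→∞} (1/√m) ∑_{j=0}^{∞} V_{m·2^j}/2^{j/2} = 0. -/
open Filter

open Finset


lemma rpow_three_halves (x : ℝ) (hx : 0 ≤ x) :
    x ^ ((3:ℝ)/2) = x * Real.sqrt x := by
  rcases eq_or_lt_of_le hx with h | h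
  · rw [← h, Real.zero_rpow (by norm_num)]; simp
  · rw [show ((3:ℝ)/2) = 1 + 1/2 by norm_num, Real.rpow_add h, Real.rpow_one,
      Real.sqrt_eq_rpow]

lemma avg_bound (V : ℕ → ℝ) (hnonneg : ∀ n, 1 ≤ n → 0 ≤ V n)
    (hsub : ∀ m n, 1 ≤ m → 1 ≤ n → V (m + n) ≤ V m + V n)
    (N : ℕ) (hN : 2 ≤ N) :
    (N : ℝ) * V N ≤ 4 * ∑ k ∈ Finset.Ico 1 N, V k := by
  have key : ∀ k ∈ Finset.Ico 1 N, V N ≤ V k + V (N - k) := by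
    intro k hk
    simp only [Finset.mem_Ico] at hk
    have h : k + (N - k) = N := by omega
    calc V N = V (k + (N-k)) := by rw [h]
      _ ≤ V k + V (N-k) := hsub _ _ hk.1 (by omega)
  have hsum1 : (Finset.Ico 1 N).card • V N ≤ ∑ k ∈ Finset.Ico 1 N, (V k + V (N - k)) :=
    Finset.card_nsmul_le_sum _ _ _ key
  have hrefl : ∑ k ∈ Finset.Ico 1 N, V (N - k) = ∑ k ∈ Finset.Ico 1 N, V k := by
    apply Finset.sum_nbij' (fun k => N - k) (fun k => N - k) <;>
      intros a ha <;> simp_all [Finset.mem_Ico] <;> omega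
  have hcard : (Finset.Ico 1 N).card = N - 1 := by simp
  rw [Finset.sum_add_distrib, hrefl, hcard] at hsum1
  have hVN : 0 ≤ V N := hnonneg N (by omega)
  have h2 : ((N:ℝ) - 1) * V N ≤ 2 * ∑ k ∈ Finset.Ico 1 N, V k := by
    have : ((N - 1 : ℕ) : ℝ) = (N:ℝ) - 1 := by
      rw [Nat.cast_sub (by omega : 1 ≤ N)]; norm_num
    rw [nsmul_eq_mul, this] at hsum1
    linarith
  have hN' : (2:ℝ) ≤ (N:ℝ) := by exact_mod_cast hN
  nlinarith [mul_le_mul_of_nonneg_right (show (N:ℝ) ≤ 2*((N:ℝ)-1) by linarith) hVN]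


lemma indicator_geom_bound (m k J : ℕ) (hm : 1 ≤ m) {r : ℝ} (hr0 : 0 ≤ r) (hr1 : r < 1) :
    ∃ j0 : ℕ, k < m * 2 ^ j0 ∧ (k < m → j0 = 0) ∧
      ∑ j ∈ Finset.range J, (if k < m * 2 ^ j then r ^ j else 0) ≤ (1 - r)⁻¹ * r ^ j0 := by
  have hex : ∃ j : ℕ, k < m * 2 ^ j := by
    refine ⟨k, ?_⟩
    calc k < 2 ^ k := Nat.lt_two_pow_self
      _ ≤ m * 2 ^ k := by nlinarith [Nat.one_le_two_pow (n := k)]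
  refine ⟨Nat.find hex, Nat.find_spec hex, fun hkm => ?_, ?_⟩
  · exact Nat.le_zero.mp (Nat.find_min' hex (by simpa using hkm))
  · set j0 := Nat.find hex with hj0
    have step1 : ∑ j ∈ Finset.range J, (if k < m * 2 ^ j then r ^ j else 0)
        ≤ ∑ j ∈ Finset.range J, (if j0 ≤ j then r ^ j else 0) := by
      apply Finset.sum_le_sum
      intro j hj
      by_cases h : k < m * 2 ^ j
      · rw [if_pos h, if_pos (Nat.find_min' hex h)]
      · rw [if_neg h]
        positivity
    have step2 : ∑ j ∈ Finset.range J, (if j0 ≤ j then r ^ j else 0)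
        = ∑ j ∈ Finset.Ico j0 (max j0 J), r ^ j := by
      rw [← Finset.sum_filter]
      congr 1
      ext j
      simp only [Finset.mem_filter, Finset.mem_range, Finset.mem_Ico]
      omega
    have step3 : ∑ j ∈ Finset.Ico j0 (max j0 J), r ^ j
        = r ^ j0 * ∑ i ∈ Finset.range (max j0 J - j0), r ^ i := by
      rw [Finset.sum_Ico_eq_sum_range, Finset.mul_sum]
      exact Finset.sum_congr rfl fun i _ => by rw [← pow_add]
    have step4 : ∑ i ∈ Finset.range (max j0 J - j0), r ^ i ≤ (1 - r)⁻¹ :=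
      Summable.sum_le_tsum _ (fun i _ => by positivity)
        (summable_geometric_of_lt_one hr0 hr1) |>.trans
        (le_of_eq (tsum_geometric_of_lt_one hr0 hr1))
    calc _ ≤ _ := step1
      _ = _ := step2
      _ = _ := step3
      _ ≤ r ^ j0 * (1 - r)⁻¹ := by
          apply mul_le_mul_of_nonneg_left step4; positivity
      _ = (1 - r)⁻¹ * r ^ j0 := by ring


lemma main_bound (V : ℕ → ℝ) (hnonneg : ∀ n, 1 ≤ n → 0 ≤ V n)
    (hsub : ∀ m n, 1 ≤ m → 1 ≤ n → V (m + n) ≤ V m + V n)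
    (hsum : Summable (fun n : ℕ => V (n + 1) / ((n + 1 : ℝ) ^ ((3 : ℝ) / 2))))
    (m J : ℕ) (hm : 1 ≤ m) :
    ∑ j ∈ Finset.range J, (if 2 ≤ m * 2 ^ j then V (m * 2 ^ j) / (Real.sqrt 2) ^ j else 0)
      ≤ 8 / m * ∑ k ∈ Finset.Ico 1 m, V k
        + 8 * Real.sqrt m *
          ∑' n : ℕ, (fun i : ℕ => V (i + 1) / ((i + 1 : ℝ) ^ ((3 : ℝ) / 2))) (n + (m - 1)) := by
  set a : ℕ → ℝ := fun i : ℕ => V (i + 1) / ((i + 1 : ℝ) ^ ((3 : ℝ) / 2)) with ha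
  set s : ℝ := Real.sqrt 2 with hs
  have hs0 : 0 < s := Real.sqrt_pos.mpr (by norm_num)
  have hs1 : 1 ≤ s := by
    rw [hs, show (1:ℝ) = Real.sqrt 1 by simp]
    exact Real.sqrt_le_sqrt (by norm_num)
  have hss : s * s = 2 := Real.mul_self_sqrt (by norm_num)
  set r : ℝ := (2 * s)⁻¹ with hr
  have hr0 : 0 ≤ r := by positivity
  have hrhalf : r ≤ 1/2 := by
    rw [hr, show (1:ℝ)/2 = (2:ℝ)⁻¹ by norm_num]
    exact inv_anti₀ (by norm_num) (by linarith)
  have hr1 : r < 1 := lt_of_le_of_lt hrhalf (by norm_num)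
  have hC : (1 - r)⁻¹ ≤ 2 := by
    rw [inv_le_comm₀ (by linarith) (by norm_num)]
    linarith
  have hC0 : 0 < (1 - r)⁻¹ := by rw [inv_pos]; linarith
  set M := m * 2 ^ J with hM
  have hNM : ∀ j ∈ Finset.range J, m * 2 ^ j ≤ M := by
    intro j hj
    simp only [Finset.mem_range] at hj
    exact Nat.mul_le_mul_left m (Nat.pow_le_pow_right (by norm_num) (le_of_lt hj))
  have hmM : m ≤ M := Nat.le_mul_of_pos_right m (Nat.pow_pos (by norm_num))
  -- Step A: per-j bound
  have stepA : ∀ j ∈ Finset.range J,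
      (if 2 ≤ m * 2 ^ j then V (m * 2 ^ j) / s ^ j else 0)
        ≤ ∑ k ∈ Finset.Ico 1 M, (if k < m * 2 ^ j then 4 * V k / m * r ^ j else 0) := by
    intro j hj
    have hfilter : (Finset.Ico 1 M).filter (fun k => k < m * 2 ^ j) = Finset.Ico 1 (m * 2 ^ j) := by
      ext k
      have := hNM j hj
      simp only [Finset.mem_filter, Finset.mem_Ico]
      omega
    have hRHS : ∑ k ∈ Finset.Ico 1 M, (if k < m * 2 ^ j then 4 * V k / m * r ^ j else 0)
        = 4 / m * r ^ j * ∑ k ∈ Finset.Ico 1 (m * 2 ^ j), V k := by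
      rw [← Finset.sum_filter, hfilter, Finset.mul_sum]
      exact Finset.sum_congr rfl fun k _ => by ring
    rw [hRHS]
    by_cases h2 : 2 ≤ m * 2 ^ j
    · rw [if_pos h2]
      have hA := avg_bound V hnonneg hsub (m * 2 ^ j) h2
      have hsj : (0:ℝ) < s ^ j := by positivity
      have h2j : (0:ℝ) < (2:ℝ) ^ j := by positivity
      have hm0 : (0:ℝ) < (m:ℝ) := by exact_mod_cast hm
      have hNr : ((m * 2 ^ j : ℕ) : ℝ) = (m:ℝ) * 2 ^ j := by push_cast; ring
      have hrj : r ^ j = ((2:ℝ) ^ j * s ^ j)⁻¹ := by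
        rw [hr, ← mul_pow, ← inv_pow]
      rw [hrj]
      rw [hNr] at hA
      have heq : (4 / (m:ℝ) * (((2:ℝ)^j * s^j)⁻¹) * ∑ k ∈ Finset.Ico 1 (m * 2 ^ j), V k) * s ^ j
          = 4 * (∑ k ∈ Finset.Ico 1 (m * 2 ^ j), V k) / ((m:ℝ) * 2 ^ j) := by
        field_simp
      rw [div_le_iff₀ hsj, heq, le_div_iff₀ (by positivity)]
      nlinarith [hA]
    · rw [if_neg h2]
      have : m * 2 ^ j = 1 := by
        have : 1 ≤ m * 2 ^ j := Nat.one_le_iff_ne_zero.mpr (by positivity)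
        omega
      rw [this]
      simp
  have ha_nonneg : ∀ n, 0 ≤ a n := by
    intro n
    apply div_nonneg (hnonneg _ (by omega))
    positivity
  -- Step B : swap sums
  have stepB : ∑ j ∈ Finset.range J, (if 2 ≤ m * 2 ^ j then V (m * 2 ^ j) / s ^ j else 0)
      ≤ ∑ k ∈ Finset.Ico 1 M, (4 * V k / m) *
          ∑ j ∈ Finset.range J, (if k < m * 2 ^ j then r ^ j else 0) := by
    calc ∑ j ∈ Finset.range J, (if 2 ≤ m * 2 ^ j then V (m * 2 ^ j) / s ^ j else 0)
        ≤ ∑ j ∈ Finset.range J, ∑ k ∈ Finset.Ico 1 M,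
            (if k < m * 2 ^ j then 4 * V k / m * r ^ j else 0) := Finset.sum_le_sum stepA
      _ = ∑ k ∈ Finset.Ico 1 M, ∑ j ∈ Finset.range J,
            (if k < m * 2 ^ j then 4 * V k / m * r ^ j else 0) := Finset.sum_comm
      _ = _ := by
          refine Finset.sum_congr rfl fun k _ => ?_
          rw [Finset.mul_sum]
          refine Finset.sum_congr rfl fun j _ => ?_
          by_cases h : k < m * 2 ^ j <;> simp [h]
  -- Step C : per-k bound
  have stepC : ∀ k ∈ Finset.Ico 1 M,
      (4 * V k / m) * ∑ j ∈ Finset.range J, (if k < m * 2 ^ j then r ^ j else 0)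
        ≤ (if k < m then 8 / m * V k
            else 8 * Real.sqrt m * (V k / ((k : ℝ) ^ ((3:ℝ)/2)))) := by
    intro k hk
    simp only [Finset.mem_Ico] at hk
    have hk1 : 1 ≤ k := hk.1
    have hVk : 0 ≤ V k := hnonneg k hk1
    have hm0 : (0:ℝ) < (m:ℝ) := by exact_mod_cast hm
    have hfac : 0 ≤ 4 * V k / m := by positivity
    obtain ⟨j0, hj0spec, hj0zero, hgb⟩ := indicator_geom_bound m k J hm hr0 hr1
    have step1 : (4 * V k / m) * ∑ j ∈ Finset.range J, (if k < m * 2 ^ j then r ^ j else 0)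
        ≤ (4 * V k / m) * ((1 - r)⁻¹ * r ^ j0) := mul_le_mul_of_nonneg_left hgb hfac
    by_cases hkm : k < m
    · rw [if_pos hkm]
      rw [hj0zero hkm, pow_zero, mul_one] at step1
      refine step1.trans ?_
      calc (4 * V k / m) * (1 - r)⁻¹ ≤ (4 * V k / m) * 2 :=
            mul_le_mul_of_nonneg_left hC hfac
        _ = 8 / m * V k := by ring
    · rw [if_neg hkm]
      push_neg at hkm
      have hkm' : (m:ℝ) ≤ (k:ℝ) := by exact_mod_cast hkm
      have hk0 : (0:ℝ) < (k:ℝ) := by exact_mod_cast hk1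
      set c : ℝ := (2:ℝ) ^ j0 with hc
      have hc0 : 0 < c := by positivity
      set y : ℝ := (k:ℝ) / m with hy
      have hy1 : 1 ≤ y := (one_le_div hm0).mpr hkm'
      have hy0 : 0 < y := lt_of_lt_of_le one_pos hy1
      have hyc : y ≤ c := by
        rw [hy, div_le_iff₀ hm0]
        have : (k:ℝ) ≤ (m:ℝ) * 2 ^ j0 := by
          have := hj0spec.le
          exact_mod_cast this
        linarith [this]
      have hsqc : s ^ j0 = Real.sqrt c := by
        have h1 : c = (s ^ j0) ^ 2 := by
          rw [hc, ← hss]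
          rw [sq, ← mul_pow]
        rw [h1, Real.sqrt_sq (by positivity)]
      have hrj0 : r ^ j0 = (c * Real.sqrt c)⁻¹ := by
        rw [hr, ← hsqc, inv_pow, mul_pow, hc]
      have hmono : y * Real.sqrt y ≤ c * Real.sqrt c :=
        mul_le_mul hyc (Real.sqrt_le_sqrt hyc) (Real.sqrt_nonneg y) hc0.le
      have hinv : r ^ j0 ≤ (y * Real.sqrt y)⁻¹ := by
        rw [hrj0]
        exact inv_anti₀ (by positivity) hmono
      have step2 : (4 * V k / m) * ((1 - r)⁻¹ * r ^ j0)
          ≤ (4 * V k / m) * (2 * (y * Real.sqrt y)⁻¹) := by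
        apply mul_le_mul_of_nonneg_left _ hfac
        apply mul_le_mul hC hinv (by positivity) (by norm_num)
      refine step1.trans (step2.trans ?_)
      have hsm : 0 < Real.sqrt m := Real.sqrt_pos.mpr hm0
      have hsk : 0 < Real.sqrt k := Real.sqrt_pos.mpr hk0
      have hyy : y * Real.sqrt y = ((k:ℝ) * Real.sqrt k) / ((m:ℝ) * Real.sqrt m) := by
        rw [hy, Real.sqrt_div hk0.le]
        field_simp
      refine le_of_eq ?_
      rw [hyy, inv_div, rpow_three_halves _ hk0.le]
      field_simp
      ring
  -- Step D : split and conclude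
  refine stepB.trans ((Finset.sum_le_sum stepC).trans ?_)
  rw [← Finset.sum_Ico_consecutive
      (f := fun k => if k < m then 8 / (m:ℝ) * V k
        else 8 * Real.sqrt m * (V k / ((k : ℝ) ^ ((3:ℝ)/2))))
      (show 1 ≤ m from hm) hmM]
  have part1 : ∑ k ∈ Finset.Ico 1 m,
      (if k < m then 8 / (m:ℝ) * V k else 8 * Real.sqrt m * (V k / ((k : ℝ) ^ ((3:ℝ)/2))))
      = 8 / m * ∑ k ∈ Finset.Ico 1 m, V k := by
    rw [Finset.mul_sum]
    refine Finset.sum_congr rfl fun k hk => ?_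
    simp only [Finset.mem_Ico] at hk
    rw [if_pos hk.2]
  have part2 : ∑ k ∈ Finset.Ico m M,
      (if k < m then 8 / (m:ℝ) * V k else 8 * Real.sqrt m * (V k / ((k : ℝ) ^ ((3:ℝ)/2))))
      = 8 * Real.sqrt m * ∑ k ∈ Finset.Ico m M, V k / ((k : ℝ) ^ ((3:ℝ)/2)) := by
    rw [Finset.mul_sum]
    refine Finset.sum_congr rfl fun k hk => ?_
    simp only [Finset.mem_Ico] at hk
    rw [if_neg (by omega)]
  have hshift : Summable (fun n : ℕ => a (n + (m - 1))) :=
    (summable_nat_add_iff (m - 1)).mpr hsum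
  have part3 : ∑ k ∈ Finset.Ico m M, V k / ((k : ℝ) ^ ((3:ℝ)/2))
      ≤ ∑' n : ℕ, a (n + (m - 1)) := by
    rw [Finset.sum_Ico_eq_sum_range]
    have heq : ∀ i ∈ Finset.range (M - m),
        V (m + i) / (((m + i : ℕ) : ℝ) ^ ((3:ℝ)/2)) = a (i + (m - 1)) := by
      intro i _
      rw [ha]
      simp only
      have h1 : i + (m - 1) + 1 = m + i := by omega
      have h2 : ((i + (m - 1) : ℕ) : ℝ) + 1 = ((m + i : ℕ) : ℝ) := by
        have : (i + (m-1) : ℕ) + 1 = m + i := by omega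
        exact_mod_cast congrArg (Nat.cast (R := ℝ)) this
      rw [h1, h2]
    rw [Finset.sum_congr rfl heq]
    exact Summable.sum_le_tsum _ (fun n _ => ha_nonneg _) hshift
  rw [part1, part2]
  have : 8 * Real.sqrt m * ∑ k ∈ Finset.Ico m M, V k / ((k : ℝ) ^ ((3:ℝ)/2))
      ≤ 8 * Real.sqrt m * ∑' n : ℕ, a (n + (m - 1)) :=
    mul_le_mul_of_nonneg_left part3 (by positivity)
  linarith

/-- Lemma 2.8 of Peligrad–Utev: if `(V n)` is a subadditive sequence of nonnegative
reals with `∑ n^{-3/2} V n < ∞`, then each series `∑_j V (m·2^j)/2^{j/2}` converges and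
`(1/√m) ∑_j V (m·2^j)/2^{j/2} → 0` as `m → ∞`. -/
theorem subadditive_weighted_series_tendsto_zero
    (V : ℕ → ℝ)
    (hnonneg : ∀ n, 1 ≤ n → 0 ≤ V n)
    (hsub : ∀ m n, 1 ≤ m → 1 ≤ n → V (m + n) ≤ V m + V n)
    (hsum : Summable (fun n : ℕ => V (n + 1) / ((n + 1 : ℝ) ^ ((3 : ℝ) / 2)))) :
    (∀ m : ℕ, 1 ≤ m → Summable (fun j : ℕ => V (m * 2 ^ j) / ((2 : ℝ) ^ ((j : ℝ) / 2)))) ∧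
    Tendsto (fun m : ℕ =>
        (1 / Real.sqrt m) * ∑' j : ℕ, V (m * 2 ^ j) / ((2 : ℝ) ^ ((j : ℝ) / 2)))
      atTop (nhds 0) := by
  have hpow : ∀ j : ℕ, (2:ℝ) ^ ((j:ℝ)/2) = (Real.sqrt 2) ^ j := by
    intro j
    rw [Real.sqrt_eq_rpow, ← Real.rpow_natCast ((2:ℝ)^((1:ℝ)/2)) j,
      ← Real.rpow_mul (by norm_num : (0:ℝ) ≤ 2)]
    congr 1
    ring
  have hf_eq : ∀ m : ℕ, (fun j : ℕ => V (m * 2 ^ j) / ((2:ℝ) ^ ((j:ℝ)/2)))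
      = fun j : ℕ => V (m * 2 ^ j) / (Real.sqrt 2) ^ j := by
    intro m; funext j; rw [hpow]
  have hs2 : (0:ℝ) < Real.sqrt 2 := Real.sqrt_pos.mpr (by norm_num)
  have hg_nonneg : ∀ m j : ℕ,
      0 ≤ (if 2 ≤ m * 2 ^ j then V (m * 2 ^ j) / (Real.sqrt 2) ^ j else 0) := by
    intro m j
    split
    · exact div_nonneg (hnonneg _ (by omega)) (by positivity)
    · exact le_refl _
  have hgsum : ∀ m : ℕ, 1 ≤ m →
      Summable (fun j : ℕ => if 2 ≤ m * 2 ^ j then V (m * 2 ^ j) / (Real.sqrt 2) ^ j else 0) := by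
    intro m hm
    apply summable_of_sum_range_le (hg_nonneg m)
    intro J
    exact main_bound V hnonneg hsub hsum m J hm
  have hcond : ∀ m j : ℕ, 1 ≤ m → 1 ≤ j → 2 ≤ m * 2 ^ j := by
    intro m j hm hj
    have h1 : 2 ^ 1 ≤ 2 ^ j := Nat.pow_le_pow_right (by norm_num) hj
    calc 2 = 1 * 2 ^ 1 := by norm_num
      _ ≤ m * 2 ^ j := Nat.mul_le_mul hm h1
  constructor
  · intro m hm
    rw [hf_eq m]
    rw [← summable_nat_add_iff 1]
    refine ((summable_nat_add_iff 1).mpr (hgsum m hm)).congr fun j => ?_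
    exact if_pos (hcond m (j+1) hm (by omega))
  · -- Tendsto part
    set a : ℕ → ℝ := fun n : ℕ => V (n + 1) / ((n + 1 : ℝ) ^ ((3 : ℝ) / 2)) with ha
    have ha_nonneg : ∀ n, 0 ≤ a n := by
      intro n
      apply div_nonneg (hnonneg _ (by omega))
      positivity
    set T : ℕ → ℝ := fun m => ∑' n : ℕ, a (n + (m - 1)) with hT
    set A : ℕ → ℝ := fun m => ∑ k ∈ Finset.Ico 1 m, V k with hA
    -- the key eventual bound
    have key : ∀ m : ℕ, 2 ≤ m →
        (1 / Real.sqrt m) * ∑' j : ℕ, V (m * 2 ^ j) / ((2:ℝ) ^ ((j:ℝ)/2))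
          ≤ 8 * (A m / ((m:ℝ) * Real.sqrt m)) + 8 * T m := by
      intro m hm2
      have hm : 1 ≤ m := by omega
      have hm0 : (0:ℝ) < (m:ℝ) := by exact_mod_cast hm
      have hsm : 0 < Real.sqrt m := Real.sqrt_pos.mpr hm0
      have hall : ∀ j : ℕ, 2 ≤ m * 2 ^ j := by
        intro j
        have h1 : 1 ≤ 2 ^ j := Nat.one_le_two_pow
        calc 2 ≤ m := hm2
          _ = m * 1 := by ring
          _ ≤ m * 2 ^ j := Nat.mul_le_mul_left m h1
      have htsum_le : ∑' j : ℕ, V (m * 2 ^ j) / ((2:ℝ) ^ ((j:ℝ)/2))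
          ≤ 8 / m * A m + 8 * Real.sqrt m * T m := by
        rw [hf_eq m]
        apply Real.tsum_le_of_sum_range_le
        · intro j
          exact div_nonneg (hnonneg _ (by have := hall j; omega)) (by positivity)
        · intro J
          have := main_bound V hnonneg hsub hsum m J hm
          refine le_trans (le_of_eq ?_) this
          exact (Finset.sum_congr rfl fun j _ => (if_pos (hall j)).symm)
      have h1m : 0 ≤ 1 / Real.sqrt m := by positivity
      calc (1 / Real.sqrt m) * ∑' j : ℕ, V (m * 2 ^ j) / ((2:ℝ) ^ ((j:ℝ)/2))
          ≤ (1 / Real.sqrt m) * (8 / m * A m + 8 * Real.sqrt m * T m) :=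
            mul_le_mul_of_nonneg_left htsum_le h1m
        _ = 8 * (A m / ((m:ℝ) * Real.sqrt m)) + 8 * T m := by
            field_simp
    -- limits of the two bound pieces
    have hT0 : Tendsto T atTop (nhds 0) := by
      have h1 : Tendsto (fun i : ℕ => ∑' k : ℕ, a (k + i)) atTop (nhds 0) :=
        tendsto_sum_nat_add a
      exact h1.comp (tendsto_sub_atTop_nat 1)
    have hdenom : Tendsto (fun m : ℕ => (m:ℝ) * Real.sqrt m) atTop atTop := by
      have h := (tendsto_rpow_atTop (by norm_num : (0:ℝ) < 3/2)).comp
        tendsto_natCast_atTop_atTop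
      refine h.congr fun m => ?_
      exact rpow_three_halves _ (Nat.cast_nonneg m)
    have hA0 : Tendsto (fun m : ℕ => A m / ((m:ℝ) * Real.sqrt m)) atTop (nhds 0) := by
      set F : ℕ → ℕ → ℝ := fun m n =>
        if n + 1 < m then V (n + 1) / ((m:ℝ) * Real.sqrt m) else 0 with hF
      have hlim : ∀ n : ℕ, Tendsto (fun m => F m n) atTop (nhds 0) := by
        intro n
        have h2 : Tendsto (fun m : ℕ => V (n+1) / ((m:ℝ) * Real.sqrt m)) atTop (nhds 0) :=
          Filter.Tendsto.div_atTop tendsto_const_nhds hdenom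
        refine h2.congr' ?_
        filter_upwards [eventually_ge_atTop (n + 2)] with m hmn
        rw [hF]
        simp only
        rw [if_pos (by omega)]
      have hbound : ∀ᶠ m in atTop, ∀ n : ℕ, ‖F m n‖ ≤ a n := by
        filter_upwards with m
        intro n
        rw [hF]
        simp only
        split
        · next h =>
          have hn1 : (0:ℝ) < ((n:ℝ)+1) := by positivity
          have hmn : ((n:ℝ)+1) ≤ (m:ℝ) := by
            have : (n+1 : ℕ) ≤ m := by omega
            exact_mod_cast this
          have hm0 : (0:ℝ) < (m:ℝ) := lt_of_lt_of_le hn1 hmn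
          have hVn : 0 ≤ V (n+1) := hnonneg _ (by omega)
          rw [Real.norm_of_nonneg (div_nonneg hVn (by positivity))]
          rw [ha]
          simp only
          rw [rpow_three_halves _ (by positivity)]
          apply div_le_div_of_nonneg_left hVn (by positivity)
          · exact mul_le_mul hmn (Real.sqrt_le_sqrt hmn) (Real.sqrt_nonneg _) hm0.le
        · simpa using ha_nonneg n
      have hmain := tendsto_tsum_of_dominated_convergence hsum hlim hbound
      simp only [tsum_zero] at hmain
      refine hmain.congr' ?_
      filter_upwards [eventually_ge_atTop 1] with m hm
      have hid : ∑' n : ℕ, F m n = A m / ((m:ℝ) * Real.sqrt m) := by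
        rw [tsum_eq_sum (s := Finset.range (m - 1))
          (by intro n hn; simp only [Finset.mem_range] at hn; rw [hF]; simp only;
              rw [if_neg (by omega)])]
        have : ∀ n ∈ Finset.range (m-1), F m n = V (n+1) / ((m:ℝ) * Real.sqrt m) := by
          intro n hn
          simp only [Finset.mem_range] at hn
          rw [hF]
          simp only
          rw [if_pos (by omega)]
        rw [Finset.sum_congr rfl this, ← Finset.sum_div]
        congr 1
        rw [hA]
        simp only
        rw [Finset.sum_Ico_eq_sum_range]
        exact Finset.sum_congr (by rfl) fun i _ => by rw [Nat.add_comm 1 i]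
      exact hid
    have hRHS : Tendsto (fun m : ℕ => 8 * (A m / ((m:ℝ) * Real.sqrt m)) + 8 * T m)
        atTop (nhds 0) := by
      have := (hA0.const_mul 8).add (hT0.const_mul 8)
      simpa using this
    apply squeeze_zero' _ _ hRHS
    · filter_upwards [eventually_ge_atTop 2] with m hm2
      have h1m : 0 ≤ 1 / Real.sqrt m := by positivity
      apply mul_nonneg h1m
      apply tsum_nonneg
      intro j
      apply div_nonneg (hnonneg _ ?_) (by positivity)
      have := hcond m j (by omega)
      have h1 : 1 ≤ 2 ^ j := Nat.one_le_two_pow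
      have : 1 ≤ m := by omega
      calc 1 = 1 * 1 := by norm_num
        _ ≤ m * 2 ^ j := Nat.mul_le_mul this h1
    · filter_upwards [eventually_ge_atTop 2] with m hm2
      exact key m hm2
end

section
/- Conjugacy of tent maps: let 1 < a ≤ √2, x* = (a−1)/(a+1), I₁ = [−x*, x*], and φ_{1a}(x) = −x/x*. Then φ_{1a} maps I₁ bijectively onto [−1,1] and T_{a²} ∘ φ_{1a} = φ_{1a} ∘ T_a² on I₁, where T_b(x) = b − 1 − b|x|. In particular T_a² restricted to I₁ is topologically conjugate to T_{a²} on [−1,1]. -/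
/-- The tent map on `[-1,1]` with parameter `b ∈ (1,2]`. -/
def tentMap (b : ℝ) (x : ℝ) : ℝ := b - 1 - b * |x|

/-- Conjugacy of tent maps (first branch): for `1 < a ≤ √2`, with `x* = (a-1)/(a+1)`,
`I₁ = [-x*, x*]` and `φ(x) = -x/x*`, the map `φ` is a bijection of `I₁` onto `[-1,1]`,
`T_a²` maps `I₁` into itself, and `T_{a²} ∘ φ = φ ∘ T_a²` on `I₁`. -/
theorem tentMap_conjugacy_first_branch (a : ℝ) (ha1 : 1 < a) (ha2 : a ≤ Real.sqrt 2) :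
    Set.BijOn (fun x => -x / ((a - 1) / (a + 1)))
        (Set.Icc (-((a - 1) / (a + 1))) ((a - 1) / (a + 1))) (Set.Icc (-1 : ℝ) 1) ∧
    Set.MapsTo (fun x => tentMap a (tentMap a x))
        (Set.Icc (-((a - 1) / (a + 1))) ((a - 1) / (a + 1)))
        (Set.Icc (-((a - 1) / (a + 1))) ((a - 1) / (a + 1))) ∧
    ∀ x ∈ Set.Icc (-((a - 1) / (a + 1))) ((a - 1) / (a + 1)),
      tentMap (a ^ 2) (-x / ((a - 1) / (a + 1)))
        = -(tentMap a (tentMap a x)) / ((a - 1) / (a + 1)) := by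
  set s : ℝ := (a - 1) / (a + 1) with hs_def
  have ha0 : (0:ℝ) < a + 1 := by linarith
  have hs : 0 < s := div_pos (by linarith) ha0
  have hsne : s ≠ 0 := ne_of_gt hs
  have ha2' : a ^ 2 ≤ 2 := by
    have h1 : a ^ 2 ≤ (Real.sqrt 2) ^ 2 :=
      pow_le_pow_left₀ (by linarith) ha2 2
    rwa [Real.sq_sqrt (by norm_num : (0:ℝ) ≤ 2)] at h1
  -- key identity: a * s = a - 1 - s, i.e. a - 1 - a * s = s
  have hkey : a - 1 - a * s = s := by
    rw [hs_def]; field_simp; ring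
  -- second iterate formula
  have key : ∀ x ∈ Set.Icc (-s) s, tentMap a (tentMap a x) = a ^ 2 * |x| - (a - 1) ^ 2 := by
    intro x hx
    have hxs : |x| ≤ s := abs_le.mpr ⟨hx.1, hx.2⟩
    have ht : 0 ≤ a - 1 - a * |x| := by nlinarith
    simp only [tentMap]
    rw [abs_of_nonneg ht]; ring
  refine ⟨⟨?_, ?_, ?_⟩, ?_, ?_⟩
  · -- MapsTo φ
    intro x hx
    simp only [Set.mem_Icc] at hx ⊢
    constructor
    · rw [le_div_iff₀ hs]; linarith [hx.2]
    · rw [div_le_one hs]; linarith [hx.1]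
  · -- InjOn
    intro x _ y _ h
    simp only at h
    field_simp at h
    exact neg_inj.mp h
  · -- SurjOn
    intro y hy
    simp only [Set.mem_Icc] at hy
    refine ⟨-y * s, ?_, ?_⟩
    · simp only [Set.mem_Icc]
      constructor <;> nlinarith
    · simp only
      field_simp
  · -- MapsTo T_a²
    intro x hx
    show tentMap a (tentMap a x) ∈ Set.Icc (-s) s
    rw [key x hx]
    have hxs : |x| ≤ s := abs_le.mpr ⟨hx.1, hx.2⟩
    have habs : 0 ≤ |x| := abs_nonneg x
    have hsq : (a - 1) ^ 2 ≤ s := by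
      rw [hs_def, le_div_iff₀ ha0]; nlinarith
    have hup : a ^ 2 * s - (a - 1) ^ 2 = s := by
      rw [hs_def]; field_simp; ring
    simp only [Set.mem_Icc]
    constructor <;> nlinarith
  · -- conjugacy
    intro x hx
    rw [key x hx]
    simp only [tentMap]
    rw [abs_div, abs_neg, abs_of_pos hs]
    have h1 : a - 1 ≠ 0 := by linarith
    have h2 : a + 1 ≠ 0 := by linarith
    rw [hs_def] at *
    field_simp
    ring
end

section
/- Conjugacy of tent maps (second branch): let 1 < a ≤ √2, x* = (a−1)/(a+1), I₀ = [x*, x*(1 + 2/a)], and φ_{0a}(x) = (a/x*)x − a − 1. Then φ_{0a} maps I₀ bijectively onto [−1,1] with inverse φ_{0a}⁻¹(x) = (x*/a)(x + a + 1), and T_{a²} ∘ φ_{0a} = φ_{0a} ∘ T_a² on I₀. -/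
/-- Conjugacy of tent maps (second branch): for `1 < a ≤ √2`, with `x* = (a-1)/(a+1)`,
`I₀ = [x*, x*(1+2/a)]` and `φ₀(x) = (a/x*)x - a - 1`, the map `φ₀` is a bijection of
`I₀` onto `[-1,1]` with inverse `x ↦ (x*/a)(x + a + 1)`, `T_a²` maps `I₀` into itself,
and `T_{a²} ∘ φ₀ = φ₀ ∘ T_a²` on `I₀`. -/
theorem tentMap_conjugacy_second_branch (a : ℝ) (ha1 : 1 < a) (ha2 : a ≤ Real.sqrt 2) :
    Set.BijOn (fun x => (a / ((a - 1) / (a + 1))) * x - a - 1)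
        (Set.Icc ((a - 1) / (a + 1)) (((a - 1) / (a + 1)) * (1 + 2 / a)))
        (Set.Icc (-1 : ℝ) 1) ∧
    (∀ x ∈ Set.Icc (-1 : ℝ) 1,
      (a / ((a - 1) / (a + 1))) * ((((a - 1) / (a + 1)) / a) * (x + a + 1)) - a - 1 = x) ∧
    (∀ y ∈ Set.Icc ((a - 1) / (a + 1)) (((a - 1) / (a + 1)) * (1 + 2 / a)),
      (((a - 1) / (a + 1)) / a) * (((a / ((a - 1) / (a + 1))) * y - a - 1) + a + 1) = y) ∧
    Set.MapsTo (fun x => tentMap a (tentMap a x))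
        (Set.Icc ((a - 1) / (a + 1)) (((a - 1) / (a + 1)) * (1 + 2 / a)))
        (Set.Icc ((a - 1) / (a + 1)) (((a - 1) / (a + 1)) * (1 + 2 / a))) ∧
    ∀ x ∈ Set.Icc ((a - 1) / (a + 1)) (((a - 1) / (a + 1)) * (1 + 2 / a)),
      tentMap (a ^ 2) ((a / ((a - 1) / (a + 1))) * x - a - 1)
        = (a / ((a - 1) / (a + 1))) * tentMap a (tentMap a x) - a - 1 := by
  have ha0 : (0:ℝ) < a := by linarith
  have ha1' : (0:ℝ) < a - 1 := by linarith
  have ha1'' : (0:ℝ) < a + 1 := by linarith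
  set s : ℝ := (a - 1) / (a + 1) with hs_def
  have hs : 0 < s := div_pos ha1' ha1''
  have ha2' : a ^ 2 ≤ 2 := by
    nlinarith [Real.sq_sqrt (by norm_num : (0:ℝ) ≤ 2), Real.sqrt_nonneg 2]
  have hc : 0 < a / s := div_pos ha0 hs
  have hcs : a / s * s = a := div_mul_cancel₀ a hs.ne'
  have hc2 : a / s * (s * (1 + 2 / a)) = a + 2 := by
    rw [hs_def]; field_simp
  have hsa : s / a * a = s := div_mul_cancel₀ s ha0.ne'
  have hsa2 : s / a * (a + 2) = s * (1 + 2 / a) := by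
    rw [hs_def]; field_simp
  -- left inverse identities
  have hlinv : ∀ x ∈ Set.Icc (-1 : ℝ) 1,
      (a / s) * ((s / a) * (x + a + 1)) - a - 1 = x := by
    intro x _
    rw [hs_def]; field_simp; ring
  have hrinv : ∀ y ∈ Set.Icc s (s * (1 + 2 / a)),
      (s / a) * (((a / s) * y - a - 1) + a + 1) = y := by
    intro y _
    rw [hs_def]; field_simp; ring
  -- maps-to properties of φ and its inverse
  have hmf : Set.MapsTo (fun x => (a / s) * x - a - 1)
      (Set.Icc s (s * (1 + 2 / a))) (Set.Icc (-1 : ℝ) 1) := by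
    intro x hx
    obtain ⟨hx1, hx2⟩ := hx
    have h1 := mul_le_mul_of_nonneg_left hx1 hc.le
    have h2 := mul_le_mul_of_nonneg_left hx2 hc.le
    rw [hcs] at h1
    rw [hc2] at h2
    constructor <;> simp only [] <;> linarith
  have hmg : Set.MapsTo (fun x => (s / a) * (x + a + 1))
      (Set.Icc (-1 : ℝ) 1) (Set.Icc s (s * (1 + 2 / a))) := by
    intro y hy
    obtain ⟨hy1, hy2⟩ := hy
    have hsapos : 0 < s / a := div_pos hs ha0
    have h1 : s / a * a ≤ s / a * (y + a + 1) := by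
      apply mul_le_mul_of_nonneg_left _ hsapos.le; linarith
    have h2 : s / a * (y + a + 1) ≤ s / a * (a + 2) := by
      apply mul_le_mul_of_nonneg_left _ hsapos.le; linarith
    rw [hsa] at h1
    rw [hsa2] at h2
    exact ⟨h1, h2⟩
  refine ⟨?_, hlinv, hrinv, ?_, ?_⟩
  · -- bijection
    refine Set.InvOn.bijOn ⟨?_, ?_⟩ hmf hmg
    · intro y hy
      exact hrinv y hy
    · intro x hx
      exact hlinv x hx
  · -- T_a² maps I₀ into I₀
    intro x hx
    obtain ⟨hx1, hx2⟩ := hx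
    have hxpos : 0 < x := lt_of_lt_of_le hs hx1
    simp only [tentMap, abs_of_pos hxpos]
    have hus : a - 1 - a * s = s := by rw [hs_def]; field_simp; ring
    have hax1 : a * s ≤ a * x := mul_le_mul_of_nonneg_left hx1 ha0.le
    have hax2 : a * x ≤ a * (s * (1 + 2 / a)) := mul_le_mul_of_nonneg_left hx2 ha0.le
    have hval : a * (s * (1 + 2 / a)) = a * s + 2 * s := by field_simp
    rw [hval] at hax2
    have hub : |a - 1 - a * x| ≤ s := by
      rw [abs_le]; constructor <;> linarith
    have hab := abs_nonneg (a - 1 - a * x)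
    have hmul : a * |a - 1 - a * x| ≤ a * s := mul_le_mul_of_nonneg_left hub ha0.le
    have hkey2 : s * (1 + 2 / a) - (a - 1) = (a - 1) * (2 - a ^ 2) / (a * (a + 1)) := by
      rw [hs_def]; field_simp; ring
    have hub2 : a - 1 ≤ s * (1 + 2 / a) := by
      have : (0:ℝ) ≤ (a - 1) * (2 - a ^ 2) / (a * (a + 1)) := by
        apply div_nonneg (mul_nonneg ha1'.le (by linarith)) (by positivity)
      linarith
    constructor
    · linarith
    · nlinarith
  · -- conjugacy
    intro x hx
    obtain ⟨hx1, hx2⟩ := hx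
    have hxpos : 0 < x := lt_of_lt_of_le hs hx1
    simp only [tentMap, abs_of_pos hxpos]
    have hkey : a / s * (a - 1 - a * x) = -a * (a / s * x - a - 1) := by
      rw [hs_def]; field_simp; ring
    have h1 : a / s * |a - 1 - a * x| = a * |a / s * x - a - 1| := by
      calc a / s * |a - 1 - a * x| = |a / s * (a - 1 - a * x)| := by
            rw [abs_mul, abs_of_pos hc]
        _ = |-a * (a / s * x - a - 1)| := by rw [hkey]
        _ = a * |a / s * x - a - 1| := by rw [abs_mul, abs_neg, abs_of_pos ha0]
    have h2 : a / s * (a - 1) = a ^ 2 + a := by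
      rw [hs_def]; field_simp
    have hexp : a / s * (a - 1 - a * |a - 1 - a * x|) - a - 1
        = a / s * (a - 1) - a * (a / s * |a - 1 - a * x|) - a - 1 := by ring
    rw [hexp, h1, h2]
    ring
end

section
/- Let T be measure preserving on a probability space (Y, ℬ, ν), ℐ the σ-algebra of T-invariant sets, h ∈ L²(ν), and S_n = ∑_{j=0}^{n−1} h∘T^j. Then for every j ≥ 0, E_ν(S_{2^j} · (S_{2^j}∘T^{2^j}) | ℐ) = E_ν( S_{2^j} · ∑_{k=1}^{2^j} P_T^k h | ℐ ), and ‖E_ν(S_{2^j}·(S_{2^j}∘T^{2^j}) | ℐ)‖₁ ≤ ‖S_{2^j}‖₂ · ‖∑_{k=1}^{2^j} P_T^k h‖₂. -/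
open MeasureTheory ENNReal Finset

/-- The σ-algebra of strictly `T`-invariant measurable sets. -/
def invariantSigma {Y : Type*} [MeasurableSpace Y] (T : Y → Y) : MeasurableSpace Y where
  MeasurableSet' s := MeasurableSet s ∧ T ⁻¹' s = s
  measurableSet_empty := ⟨MeasurableSet.empty, by simp⟩
  measurableSet_compl s hs := ⟨hs.1.compl, by rw [Set.preimage_compl, hs.2]⟩
  measurableSet_iUnion f hf :=
    ⟨MeasurableSet.iUnion fun i => (hf i).1, by
      simp only [Set.preimage_iUnion]
      exact Set.iUnion_congr fun i => (hf i).2⟩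

open Filter

set_option linter.unusedSectionVars false

section Helpers


variable {Y : Type*} [MeasurableSpace Y] {ν : MeasureTheory.Measure Y} [IsProbabilityMeasure ν]

private lemma l2_mul_integrable {f g : Y → ℝ} (hf : MemLp f 2 ν) (hg : MemLp g 2 ν) :
    Integrable (fun y => f y * g y) ν := by
  have h12 : (1 : ℝ≥0∞) / 1 = 1 / 2 + 1 / 2 := by
    rw [ENNReal.add_halves, one_div, inv_one]
  have hmem : MemLp (f • g) 1 ν := by haveI : ENNReal.HolderTriple 2 2 1 := ⟨by simp only [← one_div]; exact h12.symm⟩; exact hg.smul hf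
  exact memLp_one_iff_integrable.mp hmem

private lemma dual_bounded (T : Y → Y) (hT : MeasurePreserving T ν ν)
    (P : (Y → ℝ) → (Y → ℝ))
    (hP : ∀ f : Y → ℝ, Integrable f ν → ∀ g : Y → ℝ, Measurable g → (∃ C : ℝ, ∀ y, |g y| ≤ C) →
      ∫ y, P f y * g y ∂ν = ∫ y, f y * g (T y) ∂ν)
    (h : Y → ℝ) (hPh : ∀ k : ℕ, MemLp (P^[k] h) 2 ν) :
    ∀ k : ℕ, ∀ g : Y → ℝ, Measurable g → (∃ C : ℝ, ∀ y, |g y| ≤ C) →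
      ∫ y, (P^[k] h) y * g y ∂ν = ∫ y, h y * g (T^[k] y) ∂ν := by
  intro k
  induction k with
  | zero => intro g _ _; simp
  | succ k ih =>
    intro g hg hgb
    have h1 : ∫ y, (P^[k + 1] h) y * g y ∂ν = ∫ y, (P^[k] h) y * g (T y) ∂ν := by
      have := hP (P^[k] h) ((hPh k).integrable one_le_two) g hg hgb
      simpa [Function.iterate_succ_apply'] using this
    rw [h1, ih (fun y => g (T y)) (hg.comp hT.measurable) (hgb.imp fun C hC y => hC (T y))]
    simp [Function.iterate_succ_apply']

private lemma dual_L2 (T : Y → Y) (hT : MeasurePreserving T ν ν)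
    (P : (Y → ℝ) → (Y → ℝ))
    (hP : ∀ f : Y → ℝ, Integrable f ν → ∀ g : Y → ℝ, Measurable g → (∃ C : ℝ, ∀ y, |g y| ≤ C) →
      ∫ y, P f y * g y ∂ν = ∫ y, f y * g (T y) ∂ν)
    (h : Y → ℝ) (hh : MemLp h 2 ν) (hPh : ∀ k : ℕ, MemLp (P^[k] h) 2 ν) :
    ∀ k : ℕ, ∀ g : Y → ℝ, Measurable g → MemLp g 2 ν →
      ∫ y, (P^[k] h) y * g y ∂ν = ∫ y, h y * g (T^[k] y) ∂ν := by
  intro k g hgm hg2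
  set gM : ℕ → Y → ℝ := fun M y => max (-(M : ℝ)) (min (M : ℝ) (g y)) with hgMdef
  have hgMm : ∀ M, Measurable (gM M) := fun M =>
    measurable_const.max (measurable_const.min hgm)
  have hgMb : ∀ M : ℕ, ∀ y, |gM M y| ≤ (M : ℝ) := by
    intro M y
    rw [abs_le]
    refine ⟨le_max_left _ _, max_le (neg_le_self (by positivity)) (min_le_left _ _)⟩
  have hgMg : ∀ M y, |gM M y| ≤ |g y| := by
    intro M y
    rw [abs_le]
    constructor
    · refine le_trans (le_min (le_trans (neg_nonpos.mpr (abs_nonneg _)) (Nat.cast_nonneg M))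
        (neg_abs_le _)) (le_max_right _ _)
    · exact max_le ((neg_nonpos.mpr (Nat.cast_nonneg M)).trans (abs_nonneg _))
        ((min_le_right _ _).trans (le_abs_self _))
  have hlim : ∀ y, Tendsto (fun M => gM M y) atTop (nhds (g y)) := by
    intro y
    apply tendsto_atTop_of_eventually_const (i₀ := ⌈|g y|⌉₊)
    intro M hM
    have hM' : |g y| ≤ (M : ℝ) := Nat.ceil_le.mp hM
    have h1 : g y ≤ (M : ℝ) := (le_abs_self _).trans hM'
    have h2 : -(M : ℝ) ≤ g y := (neg_le_neg hM').trans (neg_abs_le _)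
    simp only [hgMdef, min_eq_right h1, max_eq_right h2]
  have key : ∀ M, ∫ y, (P^[k] h) y * gM M y ∂ν = ∫ y, h y * gM M (T^[k] y) ∂ν :=
    fun M => dual_bounded T hT P hP h hPh k (gM M) (hgMm M) ⟨M, hgMb M⟩
  have t1 : Tendsto (fun M => ∫ y, (P^[k] h) y * gM M y ∂ν) atTop
      (nhds (∫ y, (P^[k] h) y * g y ∂ν)) := by
    apply tendsto_integral_of_dominated_convergence (fun y => ‖(P^[k] h) y‖ * ‖g y‖)
    · exact fun M => (hPh k).aestronglyMeasurable.mul (hgMm M).aestronglyMeasurable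
    · exact l2_mul_integrable (hPh k).norm hg2.norm
    · intro M
      filter_upwards with y
      simp only [norm_mul, Real.norm_eq_abs]
      exact mul_le_mul_of_nonneg_left (hgMg M y) (abs_nonneg _)
    · filter_upwards with y
      exact Tendsto.const_mul _ (hlim y)
  have t2 : Tendsto (fun M => ∫ y, h y * gM M (T^[k] y) ∂ν) atTop
      (nhds (∫ y, h y * g (T^[k] y) ∂ν)) := by
    apply tendsto_integral_of_dominated_convergence (fun y => ‖h y‖ * ‖g (T^[k] y)‖)
    · exact fun M => hh.aestronglyMeasurable.mul
        ((hgMm M).comp (hT.measurable.iterate k)).aestronglyMeasurable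
    · exact l2_mul_integrable hh.norm (hg2.comp_measurePreserving (hT.iterate k)).norm
    · intro M
      filter_upwards with y
      simp only [norm_mul, Real.norm_eq_abs]
      exact mul_le_mul_of_nonneg_left (hgMg M (T^[k] y)) (abs_nonneg _)
    · filter_upwards with y
      exact Tendsto.const_mul _ (hlim (T^[k] y))
  rw [show (fun M => ∫ y, (P^[k] h) y * gM M y ∂ν)
      = fun M => ∫ y, h y * gM M (T^[k] y) ∂ν from funext key] at t1
  exact tendsto_nhds_unique t1 t2

end Helpers

/-- With `S_n = ∑_{j<n} h∘T^j`, for every `j ≥ 0` one has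
`E_ν(S_{2^j}·(S_{2^j}∘T^{2^j}) | ℐ) = E_ν(S_{2^j}·∑_{k=1}^{2^j} P_T^k h | ℐ)` and
`‖E_ν(S_{2^j}·(S_{2^j}∘T^{2^j}) | ℐ)‖₁ ≤ ‖S_{2^j}‖₂ ‖∑_{k=1}^{2^j} P_T^k h‖₂`. -/
theorem condexp_crossterm_identity_and_bound
    {Y : Type*} [MeasurableSpace Y] (ν : Measure Y) [IsProbabilityMeasure ν]
    (T : Y → Y) (hT : MeasurePreserving T ν ν)
    (P : (Y → ℝ) → (Y → ℝ))
    (hP : ∀ f : Y → ℝ, Integrable f ν → ∀ g : Y → ℝ, Measurable g → (∃ C : ℝ, ∀ y, |g y| ≤ C) →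
      ∫ y, P f y * g y ∂ν = ∫ y, f y * g (T y) ∂ν)
    (h : Y → ℝ) (hh : MemLp h 2 ν)
    (hPh : ∀ k : ℕ, MemLp (P^[k] h) 2 ν) :
    ∀ j : ℕ,
      (ν[(fun y => (∑ i ∈ range (2 ^ j), h (T^[i] y)) *
            (∑ i ∈ range (2 ^ j), h (T^[i] (T^[2 ^ j] y)))) | invariantSigma T]
        =ᵐ[ν]
       ν[(fun y => (∑ i ∈ range (2 ^ j), h (T^[i] y)) *
            (∑ k ∈ Finset.Icc 1 (2 ^ j), (P^[k] h) y)) | invariantSigma T]) ∧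
      eLpNorm
          (ν[(fun y => (∑ i ∈ range (2 ^ j), h (T^[i] y)) *
              (∑ i ∈ range (2 ^ j), h (T^[i] (T^[2 ^ j] y)))) | invariantSigma T]) 1 ν
        ≤ eLpNorm (fun y => ∑ i ∈ range (2 ^ j), h (T^[i] y)) 2 ν *
            eLpNorm (fun y => ∑ k ∈ Finset.Icc 1 (2 ^ j), (P^[k] h) y) 2 ν := by
  intro j
  set n := 2 ^ j with hndef
  have hn1 : 1 ≤ n := Nat.one_le_two_pow
  have hTm : Measurable T := hT.measurable
  have hm : invariantSigma T ≤ ‹MeasurableSpace Y› := fun s hs => hs.1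
  haveI : IsFiniteMeasure (ν.trim hm) := isFiniteMeasure_trim hm
  -- measurable representative of h
  have hAE : AEMeasurable h ν := hh.aestronglyMeasurable.aemeasurable
  set h' := hAE.mk h with hh'def
  have hm' : Measurable h' := hAE.measurable_mk
  have heq : h =ᵐ[ν] h' := hAE.ae_eq_mk
  have hh' : MemLp h' 2 ν := hh.ae_eq heq
  set S : Y → ℝ := fun y => ∑ i ∈ range n, h (T^[i] y) with hSdef
  set S' : Y → ℝ := fun y => ∑ i ∈ range n, h' (T^[i] y) with hS'def
  set Q : Y → ℝ := fun y => ∑ k ∈ Finset.Icc 1 n, (P^[k] h) y with hQdef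
  have hS'm : Measurable S' := Finset.measurable_sum _ fun i _ => hm'.comp (hTm.iterate i)
  have hS2 : MemLp S 2 ν := by
    rw [hSdef]
    exact memLp_finset_sum (f := fun i y => h (T^[i] y)) _
      fun i _ => hh.comp_measurePreserving (hT.iterate i)
  have hS'k : ∀ i : ℕ, MemLp (fun y => h' (T^[i] y)) 2 ν := fun i =>
    hh'.comp_measurePreserving (hT.iterate i)
  have hS'2 : MemLp S' 2 ν := by
    rw [hS'def]
    exact memLp_finset_sum (f := fun i y => h' (T^[i] y)) _ fun i _ => hS'k i
  have hQ2 : MemLp Q 2 ν := by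
    rw [hQdef]
    exact memLp_finset_sum (f := fun k y => (P^[k] h) y) _ fun k _ => hPh k
  have hS'T : ∀ m : ℕ, MemLp (fun y => S' (T^[m] y)) 2 ν := fun m =>
    hS'2.comp_measurePreserving (hT.iterate m)
  have hSS' : S =ᵐ[ν] S' := by
    have hι : ∀ i : ℕ, (fun y => h (T^[i] y)) =ᵐ[ν] fun y => h' (T^[i] y) := fun i =>
      (hT.iterate i).quasiMeasurePreserving.ae_eq_comp heq
    have hall : ∀ᵐ y ∂ν, ∀ i : ℕ, h (T^[i] y) = h' (T^[i] y) := ae_all_iff.mpr hι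
    filter_upwards [hall] with y hy
    exact Finset.sum_congr rfl fun i _ => hy i
  -- invariance under iterates
  have hTks : ∀ (s : Set Y), T ⁻¹' s = s → ∀ k : ℕ, T^[k] ⁻¹' s = s := by
    intro s hs k
    induction k with
    | zero => simp
    | succ k ih => rw [Function.iterate_succ, Set.preimage_comp, ih, hs]
  -- the key set integral identity
  have key : ∀ s : Set Y, MeasurableSet s → T ⁻¹' s = s →
      ∫ y in s, S' y * S' (T^[n] y) ∂ν = ∫ y in s, S' y * Q y ∂ν := by
    intro s hsm hsT
    have hks := hTks s hsT
    have hmem : ∀ k : ℕ, ∀ y, T^[k] y ∈ s ↔ y ∈ s := by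
      intro k y
      conv_rhs => rw [← hks k]
      exact Iff.rfl
    have stepB : ∀ k : ℕ, ∫ y in s, S' y * (P^[k] h) y ∂ν
        = ∫ y in s, h' y * S' (T^[k] y) ∂ν := by
      intro k
      have e1 : ∫ y in s, S' y * (P^[k] h) y ∂ν = ∫ y, (P^[k] h) y * s.indicator S' y ∂ν := by
        rw [show (fun y => (P^[k] h) y * s.indicator S' y)
            = s.indicator fun y => S' y * (P^[k] h) y from funext fun y => by
          by_cases hy : y ∈ s <;>
            simp [Set.indicator_of_mem, Set.indicator_of_notMem, hy, mul_comm]]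
        exact (integral_indicator hsm).symm
      have e2 := dual_L2 T hT P hP h hh hPh k (s.indicator S') (hS'm.indicator hsm)
        (hS'2.indicator hsm)
      have e3 : ∫ y, h y * s.indicator S' (T^[k] y) ∂ν = ∫ y in s, h y * S' (T^[k] y) ∂ν := by
        rw [show (fun y => h y * s.indicator S' (T^[k] y))
            = s.indicator fun y => h y * S' (T^[k] y) from funext fun y => by
          by_cases hy : y ∈ s
          · rw [Set.indicator_of_mem ((hmem k y).mpr hy), Set.indicator_of_mem hy]
          · rw [Set.indicator_of_notMem (fun c => hy ((hmem k y).mp c)),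
              Set.indicator_of_notMem hy, mul_zero]]
        exact integral_indicator hsm
      have e4 : ∫ y in s, h y * S' (T^[k] y) ∂ν = ∫ y in s, h' y * S' (T^[k] y) ∂ν := by
        apply integral_congr_ae
        filter_upwards [ae_restrict_of_ae heq] with y hy
        rw [hy]
      rw [e1, e2, e3, e4]
    have stepD : ∀ i, i < n → ∫ y in s, h' (T^[i] y) * S' (T^[n] y) ∂ν
        = ∫ y in s, h' y * S' (T^[n - i] y) ∂ν := by
      intro i hi
      have hΦm : Measurable (s.indicator fun z => h' z * S' (T^[n - i] z)) :=
        (hm'.mul (hS'm.comp (hTm.iterate _))).indicator hsm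
      have e1 : ∫ y, s.indicator (fun z => h' z * S' (T^[n - i] z)) y ∂ν
          = ∫ y, s.indicator (fun z => h' z * S' (T^[n - i] z)) (T^[i] y) ∂ν := by
        conv_lhs => rw [← (hT.iterate i).map_eq]
        exact integral_map (hTm.iterate i).aemeasurable hΦm.aestronglyMeasurable
      have e2 : ∀ y, s.indicator (fun z => h' z * S' (T^[n - i] z)) (T^[i] y)
          = s.indicator (fun z => h' (T^[i] z) * S' (T^[n] z)) y := by
        intro y
        by_cases hy : y ∈ s
        · rw [Set.indicator_of_mem ((hmem i y).mpr hy), Set.indicator_of_mem hy]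
          congr 2
          rw [← Function.iterate_add_apply, Nat.sub_add_cancel hi.le]
        · rw [Set.indicator_of_notMem (fun c => hy ((hmem i y).mp c)),
            Set.indicator_of_notMem hy]
      rw [← integral_indicator hsm, ← integral_indicator hsm,
        show (s.indicator fun z => h' (T^[i] z) * S' (T^[n] z))
          = fun y => s.indicator (fun z => h' z * S' (T^[n - i] z)) (T^[i] y) from
          funext fun y => (e2 y).symm]
      exact e1.symm
    have lhs_eq : ∫ y in s, S' y * S' (T^[n] y) ∂ν
        = ∑ i ∈ range n, ∫ y in s, h' (T^[i] y) * S' (T^[n] y) ∂ν := by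
      rw [show (fun y => S' y * S' (T^[n] y))
          = fun y => ∑ i ∈ range n, h' (T^[i] y) * S' (T^[n] y) from
          funext fun y => by rw [hS'def]; exact Finset.sum_mul _ _ _]
      exact integral_finset_sum _ fun i _ =>
        (l2_mul_integrable (hS'k i) (hS'T n)).integrableOn
    have rhs_eq : ∫ y in s, S' y * Q y ∂ν
        = ∑ k ∈ Finset.Icc 1 n, ∫ y in s, S' y * (P^[k] h) y ∂ν := by
      rw [show (fun y => S' y * Q y)
          = fun y => ∑ k ∈ Finset.Icc 1 n, S' y * (P^[k] h) y from
          funext fun y => by rw [hQdef]; exact Finset.mul_sum _ _ _]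
      exact integral_finset_sum _ fun k _ =>
        (l2_mul_integrable hS'2 (hPh k)).integrableOn
    rw [lhs_eq, rhs_eq]
    calc ∑ i ∈ range n, ∫ y in s, h' (T^[i] y) * S' (T^[n] y) ∂ν
        = ∑ i ∈ range n, ∫ y in s, h' y * S' (T^[n - i] y) ∂ν :=
          Finset.sum_congr rfl fun i hi => stepD i (mem_range.mp hi)
      _ = ∑ k ∈ Finset.Icc 1 n, ∫ y in s, h' y * S' (T^[k] y) ∂ν := by
          refine Finset.sum_nbij' (i := fun i => n - i) (j := fun k => n - k)
            ?_ ?_ ?_ ?_ ?_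
          · intro a ha
            simp only [Finset.mem_range] at ha
            simp only [Finset.mem_Icc]
            omega
          · intro a ha
            simp only [Finset.mem_Icc] at ha
            simp only [Finset.mem_range]
            omega
          · intro a ha
            simp only [Finset.mem_range] at ha
            omega
          · intro a ha
            simp only [Finset.mem_Icc] at ha
            omega
          · exact fun a _ => rfl
      _ = ∑ k ∈ Finset.Icc 1 n, ∫ y in s, S' y * (P^[k] h) y ∂ν :=
          Finset.sum_congr rfl fun k _ => (stepB k).symm
  -- conditional expectation identity
  have hF'int : Integrable (fun y => S' y * S' (T^[n] y)) ν := l2_mul_integrable hS'2 (hS'T n)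
  have hG'int : Integrable (fun y => S' y * Q y) ν := l2_mul_integrable hS'2 hQ2
  have main : ν[(fun y => S' y * Q y)|invariantSigma T]
      =ᵐ[ν] ν[(fun y => S' y * S' (T^[n] y))|invariantSigma T] := by
    refine ae_eq_condExp_of_forall_setIntegral_eq hm hF'int
      (fun s _ _ => integrable_condExp.integrableOn) (fun s hs _ => ?_)
      stronglyMeasurable_condExp.aestronglyMeasurable
    rw [setIntegral_condExp hm hG'int hs]
    exact (key s hs.1 hs.2).symm
  have hcompS : (fun y => S (T^[n] y)) =ᵐ[ν] fun y => S' (T^[n] y) :=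
    (hT.iterate n).quasiMeasurePreserving.ae_eq_comp hSS'
  have hFF' : (fun y => S y * S (T^[n] y)) =ᵐ[ν] fun y => S' y * S' (T^[n] y) :=
    hSS'.mul hcompS
  have hGG' : (fun y => S y * Q y) =ᵐ[ν] fun y => S' y * Q y := hSS'.mul EventuallyEq.rfl
  have part1 : ν[(fun y => S y * S (T^[n] y))|invariantSigma T]
      =ᵐ[ν] ν[(fun y => S y * Q y)|invariantSigma T] :=
    ((condExp_congr_ae hFF').trans main.symm).trans (condExp_congr_ae hGG'.symm)
  refine ⟨part1, ?_⟩
  calc eLpNorm (ν[(fun y => S y * S (T^[n] y))|invariantSigma T]) 1 ν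
      = eLpNorm (ν[(fun y => S y * Q y)|invariantSigma T]) 1 ν := eLpNorm_congr_ae part1
    _ ≤ eLpNorm (fun y => S y * Q y) 1 ν := eLpNorm_one_condExp_le_eLpNorm _
    _ ≤ eLpNorm S 2 ν * eLpNorm Q 2 ν := by
        have h12 : (1 : ℝ≥0∞) / 1 = 1 / 2 + 1 / 2 := by
          rw [ENNReal.add_halves, one_div, inv_one]
        have hSQ : (fun y => S y * Q y) = S • Q := by ext y; simp [Pi.smul_apply', smul_eq_mul]
        rw [hSQ]
        haveI : ENNReal.HolderTriple 2 2 1 := ⟨by simp only [← one_div]; exact h12.symm⟩; exact eLpNorm_smul_le_mul_eLpNorm hQ2.aestronglyMeasurable hS2.aestronglyMeasurable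
end
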